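/- There exist a finite alphabet A and a quasi-regular (hence weakly regular) 3-variable language L over A such that the 2-variable language {(v, w) in (A*)^2 : for all u in A*, (u, v, w) in L} is not weakly regular. In particular, universal quantification over a coordinate does not preserve weak regularity. -/

import Mathlib

/-- An `n`-tape semi-sorted (deterministic) asynchronous automaton over `A`:
a partial deterministic finite state automaton over `A ∪ {$}` (unique start state,
no `ε`-transitions, at most one transition from each state for each letter; the
padding symbol `$` is modelled by `none : Option A`), together with a partition of
its states into `n` sets (recorded by `tape`, where `tape s = i` means `s ∈ S_i`). -/
structure SemiSortedAA (A : Type) (n : ℕ) where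
  State : Type
  fintype : Fintype State
  start : State
  accept : Set State
  /-- partial deterministic transition function over the alphabet `A ∪ {$}` -/
  step : State → Option A → Option State
  /-- the index `i` such that the state lies in `S_i` -/
  tape : State → Fin n

namespace SemiSortedAA

variable {A : Type} {n : ℕ}

/-- `M.Run s r f` : starting in state `s` with remaining (still unread) content `r i`
on the `i`-th tape, the automaton can consume all the remaining content and end in
state `f`, where from a state `s` it reads the next letter of tape `M.tape s`.
This is exactly the existence of a shuffle of the tape contents labelling a path
from `s` to `f` in which every letter originating from the `i`-th tape is read
while the automaton is in a state of `S_i`. -/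
inductive Run (M : SemiSortedAA A n) :
    M.State → (Fin n → List (Option A)) → M.State → Prop
  | nil (s : M.State) : Run M s (fun _ => []) s
  | step {s t f : M.State} {c : Option A} {rest : List (Option A)}
      {r : Fin n → List (Option A)}
      (h : M.step s c = some t)
      (hr : r (M.tape s) = c :: rest)
      (hrun : Run M t (Function.update r (M.tape s) rest) f) :
      Run M s r f

/-- `M` accepts the tuple of words `(w 1, …, w n)` if some shuffle of
`(w 1 $, …, w n $)` labels a path from the start state to an accept state,
each letter from the `i`-th word (including its terminal `$`) being read in `S_i`. -/
def Accepts (M : SemiSortedAA A n) (w : Fin n → List A) : Prop :=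
  ∃ f ∈ M.accept, M.Run M.start (fun i => (w i).map some ++ [none]) f

end SemiSortedAA

/-- An `n`-variable language is quasi-regular if it is the language accepted by some
`n`-tape semi-sorted asynchronous automaton. -/
def IsQuasiRegular {A : Type} {n : ℕ} (L : Set (Fin n → List A)) : Prop :=
  ∃ M : SemiSortedAA A n, ∀ w, w ∈ L ↔ M.Accepts w

/-- An `n`-tape non-deterministic semi-sorted asynchronous automaton (SAA) over `A`:
a non-deterministic finite state automaton over `A ∪ {$}` (possibly with
`ε`-transitions and several start states; the padding symbol `$` is modelled by
`none : Option A`) together with a partition of its state set into `n` sets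
(recorded by `tape`, where `tape s = i` means `s ∈ S_i`). -/
structure SAA (A : Type) (n : ℕ) where
  State : Type
  fintype : Fintype State
  start : Set State
  accept : Set State
  /-- non-deterministic transitions labelled by letters of `A ∪ {$}` -/
  step : State → Option A → Set State
  /-- `ε`-transitions -/
  eps : State → Set State
  /-- the index `i` such that the state lies in `S_i` -/
  tape : State → Fin n

namespace SAA

variable {A : Type} {n : ℕ}

/-- Runs of a non-deterministic semi-sorted asynchronous automaton: `M.Run s r f`
means that starting at `s` with remaining content `r i` on the `i`-th tape, the
automaton can consume all the remaining content and end at `f`, reading from tape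
`M.tape s` when in state `s` (this is the existence of an appropriate shuffle). -/
inductive Run (M : SAA A n) :
    M.State → (Fin n → List (Option A)) → M.State → Prop
  | nil (s : M.State) : Run M s (fun _ => []) s
  | eps {s t f : M.State} {r : Fin n → List (Option A)}
      (h : t ∈ M.eps s) (hrun : Run M t r f) : Run M s r f
  | step {s t f : M.State} {c : Option A} {rest : List (Option A)}
      {r : Fin n → List (Option A)}
      (h : t ∈ M.step s c)
      (hr : r (M.tape s) = c :: rest)
      (hrun : Run M t (Function.update r (M.tape s) rest) f) :
      Run M s r f

/-- The SAA accepts `(w 1, …, w n)` if some shuffle of `(w 1 $, …, w n $)` labels a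
path from a start state to an accept state, each letter from the `i`-th word being
read while the automaton is in a state of `S_i`. -/
def Accepts (M : SAA A n) (w : Fin n → List A) : Prop :=
  ∃ s₀ ∈ M.start, ∃ f ∈ M.accept,
    M.Run s₀ (fun i => (w i).map some ++ [none]) f

end SAA

/-- An `n`-variable language is weakly regular if it is the language accepted by some
`n`-tape non-deterministic semi-sorted asynchronous automaton. -/
def IsWeaklyRegular {A : Type} {n : ℕ} (L : Set (Fin n → List A)) : Prop :=
  ∃ M : SAA A n, ∀ w, w ∈ L ↔ M.Accepts w

inductive St where
  | s0 | u1 | u2 | ev | ew | p1 | q1 | d1 | vb | f1 | p2 | q2 | r2 | g2 | h2 | acc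
  deriving DecidableEq

instance : Fintype St where
  elems := {.s0, .u1, .u2, .ev, .ew, .p1, .q1, .d1, .vb, .f1, .p2, .q2, .r2, .g2, .h2, .acc}
  complete := by intro x; cases x <;> decide

def stp : St → Option Bool → Option St
  | .s0, none => some .ev
  | .s0, some true => some .u1
  | .s0, some false => some .u2
  | .u1, some _ => some .u1
  | .u1, none => some .p1
  | .u2, some _ => some .u2
  | .u2, none => some .p2
  | .ev, some _ => some .ev
  | .ev, none => some .ew
  | .ew, some _ => some .ew
  | .ew, none => some .acc
  | .p1, some true => some .q1
  | .p1, some false => some .d1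
  | .p1, none => some .f1
  | .q1, some true => some .p1
  | .d1, none => some .vb
  | .vb, some false => some .vb
  | .vb, none => some .acc
  | .f1, none => some .acc
  | .p2, some true => some .p2
  | .p2, some false => some .q2
  | .p2, none => some .h2
  | .q2, some true => some .r2
  | .r2, some false => some .q2
  | .r2, none => some .g2
  | .g2, none => some .acc
  | .h2, none => some .acc
  | _, _ => none

def tp : St → Fin 3
  | .s0 => 0 | .u1 => 0 | .u2 => 0 | .acc => 0
  | .ev => 1 | .p1 => 1 | .vb => 1 | .p2 => 1 | .r2 => 1
  | .ew => 2 | .q1 => 2 | .d1 => 2 | .f1 => 2 | .q2 => 2 | .g2 => 2 | .h2 => 2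

def M : SemiSortedAA Bool 3 := ⟨St, inferInstance, .s0, {.acc}, stp, tp⟩

-- update lemmas for ![x,y,z]
lemma upd0 (x y z x' : List (Option Bool)) :
    Function.update (![x,y,z] : Fin 3 → List (Option Bool)) 0 x' = ![x',y,z] := by
  funext i; fin_cases i <;> simp [Function.update]

lemma upd1 (x y z y' : List (Option Bool)) :
    Function.update (![x,y,z] : Fin 3 → List (Option Bool)) 1 y' = ![x,y',z] := by
  funext i; fin_cases i <;> simp [Function.update]

lemma upd2 (x y z z' : List (Option Bool)) :
    Function.update (![x,y,z] : Fin 3 → List (Option Bool)) 2 z' = ![x,y,z'] := by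
  funext i; fin_cases i <;> simp [Function.update]

lemma nil3 : (fun _ => [] : Fin 3 → List (Option Bool)) = ![[],[],[]] := by
  funext i; fin_cases i <;> rfl

lemma run_append {A : Type} {n : ℕ} {M : SemiSortedAA A n} {s m f : M.State}
    {r r' : Fin n → List (Option A)} (h1 : M.Run s r m) (h2 : M.Run m r' f) :
    M.Run s (fun i => r i ++ r' i) f := by
  induction h1 with
  | nil s => simpa using h2
  | step h hr hrun ih =>
    rename_i s t f' c rest r0
    refine SemiSortedAA.Run.step (rest := rest ++ r' (M.tape s)) h (by simp [hr]) ?_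
    have : (Function.update (fun i => r0 i ++ r' i) (M.tape s) (rest ++ r' (M.tape s)))
        = fun i => Function.update r0 (M.tape s) rest i ++ r' i := by
      funext i
      by_cases hi : i = M.tape s
      · subst hi; simp
      · simp [Function.update, hi]
    rw [this]; exact ih h2

lemma app3 (x1 y1 z1 x2 y2 z2 : List (Option Bool)) :
    (fun i => (![x1,y1,z1] : Fin 3 → List (Option Bool)) i ++ ![x2,y2,z2] i)
      = ![x1++x2, y1++y2, z1++z2] := by
  funext i; fin_cases i <;> rfl

lemma run_nil3 (s : St) : M.Run s ![[],[],[]] s := by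
  rw [← nil3]; exact SemiSortedAA.Run.nil (M := M) s

lemma mstep {s t : St} {c : Option Bool} {rest : List (Option Bool)}
    {r : Fin 3 → List (Option Bool)} {f : St}
    (h : stp s c = some t) (hr : r (tp s) = c :: rest)
    (h2 : M.Run t (Function.update r (tp s) rest) f) : M.Run s r f :=
  SemiSortedAA.Run.step h hr h2

lemma run_u1 : ∀ u : List Bool, M.Run .u1 ![u.map some ++ [none], [], []] .p1 := by
  intro u
  induction u with
  | nil =>
    refine mstep (c := none) (rest := []) rfl (by rfl) ?_
    rw [show tp .u1 = 0 from rfl, upd0]; exact run_nil3 _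
  | cons x u ih =>
    refine mstep (c := some x) (rest := u.map some ++ [none]) (by cases x <;> rfl) (by rfl) ?_
    rw [show tp .u1 = 0 from rfl, upd0]; exact ih

lemma run_u2 : ∀ u : List Bool, M.Run .u2 ![u.map some ++ [none], [], []] .p2 := by
  intro u
  induction u with
  | nil =>
    refine mstep (c := none) (rest := []) rfl (by rfl) ?_
    rw [show tp .u2 = 0 from rfl, upd0]; exact run_nil3 _
  | cons x u ih =>
    refine mstep (c := some x) (rest := u.map some ++ [none]) (by cases x <;> rfl) (by rfl) ?_
    rw [show tp .u2 = 0 from rfl, upd0]; exact ih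

lemma run_ev : ∀ v : List Bool, M.Run .ev ![[], v.map some ++ [none], []] .ew := by
  intro v
  induction v with
  | nil =>
    refine mstep (c := none) (rest := []) rfl (by rfl) ?_
    rw [show tp .ev = 1 from rfl, upd1]; exact run_nil3 _
  | cons x v ih =>
    refine mstep (c := some x) (rest := v.map some ++ [none]) (by cases x <;> rfl) (by rfl) ?_
    rw [show tp .ev = 1 from rfl, upd1]; exact ih

lemma run_ew : ∀ w : List Bool, M.Run .ew ![[], [], w.map some ++ [none]] .acc := by
  intro w
  induction w with
  | nil =>
    refine mstep (c := none) (rest := []) rfl (by rfl) ?_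
    rw [show tp .ew = 2 from rfl, upd2]; exact run_nil3 _
  | cons x w ih =>
    refine mstep (c := some x) (rest := w.map some ++ [none]) (by cases x <;> rfl) (by rfl) ?_
    rw [show tp .ew = 2 from rfl, upd2]; exact ih

lemma run_p1loop : ∀ c : ℕ,
    M.Run .p1 ![[], List.replicate c (some true), List.replicate c (some true)] .p1 := by
  intro c
  induction c with
  | zero => exact run_nil3 _
  | succ c ih =>
    refine mstep (c := some true) (rest := List.replicate c (some true)) rfl (by rfl) ?_
    rw [show tp .p1 = 1 from rfl, upd1]
    refine mstep (c := some true) (rest := List.replicate c (some true)) rfl (by rfl) ?_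
    rw [show tp .q1 = 2 from rfl, upd2]; exact ih

lemma run_vb : ∀ d : ℕ,
    M.Run .vb ![[], (List.replicate d false).map some ++ [none], []] .acc := by
  intro d
  induction d with
  | zero =>
    refine mstep (c := none) (rest := []) rfl (by rfl) ?_
    rw [show tp .vb = 1 from rfl, upd1]; exact run_nil3 _
  | succ d ih =>
    refine mstep (c := some false) (rest := (List.replicate d false).map some ++ [none])
      rfl (by rfl) ?_
    rw [show tp .vb = 1 from rfl, upd1]; exact ih

lemma run_p1b (d : ℕ) :
    M.Run .p1 ![[], ((false :: List.replicate d false).map some ++ [none]), [none]] .acc := by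
  refine mstep (c := some false) (rest := (List.replicate d false).map some ++ [none])
    rfl (by rfl) ?_
  rw [show tp .p1 = 1 from rfl, upd1]
  refine mstep (c := none) (rest := []) rfl (by rfl) ?_
  rw [show tp .d1 = 2 from rfl, upd2]
  exact run_vb d

lemma run_p1e : M.Run .p1 ![[], [none], [none]] .acc := by
  refine mstep (c := none) (rest := []) rfl (by rfl) ?_
  rw [show tp .p1 = 1 from rfl, upd1]
  refine mstep (c := none) (rest := []) rfl (by rfl) ?_
  rw [show tp .f1 = 2 from rfl, upd2]; exact run_nil3 _

lemma run_p2loop : ∀ c : ℕ,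
    M.Run .p2 ![[], List.replicate c (some true), []] .p2 := by
  intro c
  induction c with
  | zero => exact run_nil3 _
  | succ c ih =>
    refine mstep (c := some true) (rest := List.replicate c (some true)) rfl (by rfl) ?_
    rw [show tp .p2 = 1 from rfl, upd1]; exact ih

lemma run_r2 : ∀ d : ℕ,
    M.Run .r2 ![[], (List.replicate d false).map some ++ [none],
      (List.replicate d true).map some ++ [none]] .acc := by
  intro d
  induction d with
  | zero =>
    refine mstep (c := none) (rest := []) rfl (by rfl) ?_
    rw [show tp .r2 = 1 from rfl, upd1]
    refine mstep (c := none) (rest := []) rfl (by rfl) ?_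
    rw [show tp .g2 = 2 from rfl, upd2]; exact run_nil3 _
  | succ d ih =>
    refine mstep (c := some false) (rest := (List.replicate d false).map some ++ [none])
      rfl (by rfl) ?_
    rw [show tp .r2 = 1 from rfl, upd1]
    refine mstep (c := some true) (rest := (List.replicate d true).map some ++ [none])
      rfl (by rfl) ?_
    rw [show tp .q2 = 2 from rfl, upd2]; exact ih

lemma run_p2b (d : ℕ) :
    M.Run .p2 ![[], ((false :: List.replicate d false).map some ++ [none]),
      ((true :: List.replicate d true).map some ++ [none])] .acc := by
  refine mstep (c := some false) (rest := (List.replicate d false).map some ++ [none])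
    rfl (by rfl) ?_
  rw [show tp .p2 = 1 from rfl, upd1]
  refine mstep (c := some true) (rest := (List.replicate d true).map some ++ [none])
    rfl (by rfl) ?_
  rw [show tp .q2 = 2 from rfl, upd2]
  exact run_r2 d

lemma run_p2e : M.Run .p2 ![[], [none], [none]] .acc := by
  refine mstep (c := none) (rest := []) rfl (by rfl) ?_
  rw [show tp .p2 = 1 from rfl, upd1]
  refine mstep (c := none) (rest := []) rfl (by rfl) ?_
  rw [show tp .h2 = 2 from rfl, upd2]; exact run_nil3 _

lemma run_p1full (c d : ℕ) :
    M.Run .p1 ![[], (List.replicate c true ++ List.replicate d false).map some ++ [none],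
      (List.replicate c true).map some ++ [none]] .acc := by
  have h1 := run_p1loop c
  have h2 : M.Run .p1 ![[], (List.replicate d false).map some ++ [none], [none]] .acc := by
    cases d with
    | zero => simpa using run_p1e
    | succ d => simpa [List.replicate_succ] using run_p1b d
  have h3 := run_append h1 h2
  rw [app3] at h3
  simpa [List.map_replicate] using h3

lemma run_p2full (c d : ℕ) :
    M.Run .p2 ![[], (List.replicate c true ++ List.replicate d false).map some ++ [none],
      (List.replicate d true).map some ++ [none]] .acc := by
  have h1 := run_p2loop c
  have h2 : M.Run .p2 ![[], (List.replicate d false).map some ++ [none],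
      (List.replicate d true).map some ++ [none]] .acc := by
    cases d with
    | zero => simpa using run_p2e
    | succ d => simpa [List.replicate_succ] using run_p2b d
  have h3 := run_append h1 h2
  rw [app3] at h3
  simpa [List.map_replicate] using h3

lemma at0 (x y z : List (Option Bool)) : (![x,y,z] : Fin 3 → List (Option Bool)) 0 = x := rfl
lemma at1 (x y z : List (Option Bool)) : (![x,y,z] : Fin 3 → List (Option Bool)) 1 = y := rfl
lemma at2 (x y z : List (Option Bool)) : (![x,y,z] : Fin 3 → List (Option Bool)) 2 = z := rfl

/-- The three–variable language `L`. -/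
def LL : Set (Fin 3 → List Bool) :=
  {t | t 0 = [] ∨
    (∃ u c d, t 0 = true :: u ∧
      t 1 = List.replicate c true ++ List.replicate d false ∧ t 2 = List.replicate c true) ∨
    (∃ u c d, t 0 = false :: u ∧
      t 1 = List.replicate c true ++ List.replicate d false ∧ t 2 = List.replicate d true)}

lemma ct_eq (t : Fin 3 → List Bool) :
    (fun i => (t i).map some ++ [none]) =
      ![(t 0).map some ++ [none], (t 1).map some ++ [none], (t 2).map some ++ [none]] := by
  funext i; fin_cases i <;> rfl

lemma acc_of_mem (t : Fin 3 → List Bool) (ht : t ∈ LL) : M.Accepts t := by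
  refine ⟨.acc, rfl, ?_⟩
  rw [ct_eq]
  rcases ht with h0 | ⟨u, c, d, h0, h1, h2⟩ | ⟨u, c, d, h0, h1, h2⟩
  · rw [h0]
    refine mstep (c := none) (rest := []) rfl (by rfl) ?_
    rw [show tp M.start = 0 from rfl, upd0]
    have h3 := run_append (run_ev (t 1)) (run_ew (t 2))
    rw [app3] at h3
    simpa using h3
  · rw [h0, h1, h2]
    refine mstep (c := some true) (rest := u.map some ++ [none]) rfl (by rfl) ?_
    rw [show tp M.start = 0 from rfl, upd0]
    have h3 := run_append (run_u1 u) (run_p1full c d)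
    rw [app3] at h3
    simpa using h3
  · rw [h0, h1, h2]
    refine mstep (c := some false) (rest := u.map some ++ [none]) rfl (by rfl) ?_
    rw [show tp M.start = 0 from rfl, upd0]
    have h3 := run_append (run_u2 u) (run_p2full c d)
    rw [app3] at h3
    simpa using h3

lemma run_inv {s f : St} {r : Fin 3 → List (Option Bool)} (h : M.Run s r f) :
    (r = (fun _ => []) ∧ f = s) ∨
      ∃ t c rest, stp s c = some t ∧ r (tp s) = c :: rest ∧
        M.Run t (Function.update r (tp s) rest) f := by
  match h with
  | .nil _ => exact Or.inl ⟨rfl, rfl⟩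
  | .step h hr hrun => exact Or.inr ⟨_, _, _, h, hr, hrun⟩

lemma inv_vb : ∀ v : List Bool,
    M.Run .vb ![[], v.map some ++ [none], []] .acc → ∃ d, v = List.replicate d false := by
  intro v
  induction v with
  | nil =>
    intro _; exact ⟨0, rfl⟩
  | cons x v ih =>
    intro h
    rcases run_inv h with ⟨he, _⟩ | ⟨t, c, rest, hs, hr, hrun⟩
    · exact absurd (congrFun he 1) (by simp)
    · rw [show tp .vb = 1 from rfl, at1] at hr
      simp only [List.map_cons, List.cons_append, List.cons.injEq] at hr
      obtain ⟨hc, hrest⟩ := hr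
      subst hc; subst hrest
      cases x
      · simp only [stp, Option.some.injEq] at hs
        subst hs
        rw [show tp .vb = 1 from rfl, upd1] at hrun
        obtain ⟨d, hd⟩ := ih hrun
        exact ⟨d + 1, by rw [hd]; rfl⟩
      · simp [stp] at hs

lemma inv_r2 : ∀ (v w : List Bool),
    M.Run .r2 ![[], v.map some ++ [none], w.map some ++ [none]] .acc →
    ∃ d, v = List.replicate d false ∧ w = List.replicate d true := by
  intro v
  induction v with
  | nil =>
    intro w h
    rcases run_inv h with ⟨he, _⟩ | ⟨t, c, rest, hs, hr, hrun⟩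
    · exact absurd (congrFun he 1) (by simp)
    · rw [show tp .r2 = 1 from rfl, at1] at hr
      simp only [List.map_nil, List.nil_append, List.cons.injEq] at hr
      obtain ⟨hc, hrest⟩ := hr
      subst hc; subst hrest
      simp only [stp, Option.some.injEq] at hs
      subst hs
      rw [show tp .r2 = 1 from rfl, upd1] at hrun
      rcases run_inv hrun with ⟨he, _⟩ | ⟨t2, c2, rest2, hs2, hr2, hrun2⟩
      · exact absurd (congrFun he 2) (by simp)
      · rw [show tp .g2 = 2 from rfl, at2] at hr2
        cases w with
        | nil => exact ⟨0, rfl, rfl⟩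
        | cons y w' =>
          simp only [List.map_cons, List.cons_append, List.cons.injEq] at hr2
          obtain ⟨hc2, _⟩ := hr2
          subst hc2
          cases y <;> simp [stp] at hs2
  | cons x v ih =>
    intro w h
    rcases run_inv h with ⟨he, _⟩ | ⟨t, c, rest, hs, hr, hrun⟩
    · exact absurd (congrFun he 1) (by simp)
    · rw [show tp .r2 = 1 from rfl, at1] at hr
      simp only [List.map_cons, List.cons_append, List.cons.injEq] at hr
      obtain ⟨hc, hrest⟩ := hr
      subst hc; subst hrest
      cases x
      · simp only [stp, Option.some.injEq] at hs
        subst hs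
        rw [show tp .r2 = 1 from rfl, upd1] at hrun
        rcases run_inv hrun with ⟨he, _⟩ | ⟨t2, c2, rest2, hs2, hr2, hrun2⟩
        · exact absurd (congrFun he 1) (by simp)
        · rw [show tp .q2 = 2 from rfl, at2] at hr2
          cases w with
          | nil =>
            simp only [List.map_nil, List.nil_append, List.cons.injEq] at hr2
            obtain ⟨hc2, _⟩ := hr2
            subst hc2
            simp [stp] at hs2
          | cons y w' =>
            simp only [List.map_cons, List.cons_append, List.cons.injEq] at hr2
            obtain ⟨hc2, hrest2⟩ := hr2
            subst hc2; subst hrest2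
            cases y
            · simp [stp] at hs2
            · simp only [stp, Option.some.injEq] at hs2
              subst hs2
              rw [show tp .q2 = 2 from rfl, upd2] at hrun2
              obtain ⟨d, hv, hw⟩ := ih w' hrun2
              exact ⟨d + 1, by rw [hv]; rfl, by rw [hw]; rfl⟩
      · simp [stp] at hs

lemma inv_p1 : ∀ (v w : List Bool),
    M.Run .p1 ![[], v.map some ++ [none], w.map some ++ [none]] .acc →
    ∃ c d, v = List.replicate c true ++ List.replicate d false ∧
      w = List.replicate c true := by
  intro v
  induction v with
  | nil =>
    intro w h
    rcases run_inv h with ⟨he, _⟩ | ⟨t, c, rest, hs, hr, hrun⟩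
    · exact absurd (congrFun he 1) (by simp)
    · rw [show tp .p1 = 1 from rfl, at1] at hr
      simp only [List.map_nil, List.nil_append, List.cons.injEq] at hr
      obtain ⟨hc, hrest⟩ := hr
      subst hc; subst hrest
      simp only [stp, Option.some.injEq] at hs
      subst hs
      rw [show tp .p1 = 1 from rfl, upd1] at hrun
      rcases run_inv hrun with ⟨he, _⟩ | ⟨t2, c2, rest2, hs2, hr2, hrun2⟩
      · exact absurd (congrFun he 2) (by simp)
      · rw [show tp .f1 = 2 from rfl, at2] at hr2
        cases w with
        | nil => exact ⟨0, 0, rfl, rfl⟩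
        | cons y w' =>
          simp only [List.map_cons, List.cons_append, List.cons.injEq] at hr2
          obtain ⟨hc2, _⟩ := hr2
          subst hc2
          cases y <;> simp [stp] at hs2
  | cons x v ih =>
    intro w h
    rcases run_inv h with ⟨he, _⟩ | ⟨t, c, rest, hs, hr, hrun⟩
    · exact absurd (congrFun he 1) (by simp)
    · rw [show tp .p1 = 1 from rfl, at1] at hr
      simp only [List.map_cons, List.cons_append, List.cons.injEq] at hr
      obtain ⟨hc, hrest⟩ := hr
      subst hc; subst hrest
      cases x
      · -- v starts with false : go to d1, w must end, then vb
        simp only [stp, Option.some.injEq] at hs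
        subst hs
        rw [show tp .p1 = 1 from rfl, upd1] at hrun
        rcases run_inv hrun with ⟨he, _⟩ | ⟨t2, c2, rest2, hs2, hr2, hrun2⟩
        · exact absurd (congrFun he 1) (by simp)
        · rw [show tp .d1 = 2 from rfl, at2] at hr2
          cases w with
          | nil =>
            simp only [List.map_nil, List.nil_append, List.cons.injEq] at hr2
            obtain ⟨hc2, hrest2⟩ := hr2
            subst hc2; subst hrest2
            simp only [stp, Option.some.injEq] at hs2
            subst hs2
            rw [show tp .d1 = 2 from rfl, upd2] at hrun2
            obtain ⟨d, hd⟩ := inv_vb v hrun2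
            exact ⟨0, d + 1, by rw [hd]; rfl, rfl⟩
          | cons y w' =>
            simp only [List.map_cons, List.cons_append, List.cons.injEq] at hr2
            obtain ⟨hc2, _⟩ := hr2
            subst hc2
            cases y <;> simp [stp] at hs2
      · -- v starts with true : q1, w must start with true
        simp only [stp, Option.some.injEq] at hs
        subst hs
        rw [show tp .p1 = 1 from rfl, upd1] at hrun
        rcases run_inv hrun with ⟨he, _⟩ | ⟨t2, c2, rest2, hs2, hr2, hrun2⟩
        · exact absurd (congrFun he 1) (by simp)
        · rw [show tp .q1 = 2 from rfl, at2] at hr2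
          cases w with
          | nil =>
            simp only [List.map_nil, List.nil_append, List.cons.injEq] at hr2
            obtain ⟨hc2, _⟩ := hr2
            subst hc2
            simp [stp] at hs2
          | cons y w' =>
            simp only [List.map_cons, List.cons_append, List.cons.injEq] at hr2
            obtain ⟨hc2, hrest2⟩ := hr2
            subst hc2; subst hrest2
            cases y
            · simp [stp] at hs2
            · simp only [stp, Option.some.injEq] at hs2
              subst hs2
              rw [show tp .q1 = 2 from rfl, upd2] at hrun2
              obtain ⟨c, d, hv, hw⟩ := ih w' hrun2
              exact ⟨c + 1, d, by rw [hv]; rfl, by rw [hw]; rfl⟩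

lemma inv_p2 : ∀ (v w : List Bool),
    M.Run .p2 ![[], v.map some ++ [none], w.map some ++ [none]] .acc →
    ∃ c d, v = List.replicate c true ++ List.replicate d false ∧
      w = List.replicate d true := by
  intro v
  induction v with
  | nil =>
    intro w h
    rcases run_inv h with ⟨he, _⟩ | ⟨t, c, rest, hs, hr, hrun⟩
    · exact absurd (congrFun he 1) (by simp)
    · rw [show tp .p2 = 1 from rfl, at1] at hr
      simp only [List.map_nil, List.nil_append, List.cons.injEq] at hr
      obtain ⟨hc, hrest⟩ := hr
      subst hc; subst hrest
      simp only [stp, Option.some.injEq] at hs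
      subst hs
      rw [show tp .p2 = 1 from rfl, upd1] at hrun
      rcases run_inv hrun with ⟨he, _⟩ | ⟨t2, c2, rest2, hs2, hr2, hrun2⟩
      · exact absurd (congrFun he 2) (by simp)
      · rw [show tp .h2 = 2 from rfl, at2] at hr2
        cases w with
        | nil => exact ⟨0, 0, rfl, rfl⟩
        | cons y w' =>
          simp only [List.map_cons, List.cons_append, List.cons.injEq] at hr2
          obtain ⟨hc2, _⟩ := hr2
          subst hc2
          cases y <;> simp [stp] at hs2
  | cons x v ih =>
    intro w h
    rcases run_inv h with ⟨he, _⟩ | ⟨t, c, rest, hs, hr, hrun⟩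
    · exact absurd (congrFun he 1) (by simp)
    · rw [show tp .p2 = 1 from rfl, at1] at hr
      simp only [List.map_cons, List.cons_append, List.cons.injEq] at hr
      obtain ⟨hc, hrest⟩ := hr
      subst hc; subst hrest
      cases x
      · -- v starts with false : q2 / r2 phase
        simp only [stp, Option.some.injEq] at hs
        subst hs
        rw [show tp .p2 = 1 from rfl, upd1] at hrun
        rcases run_inv hrun with ⟨he, _⟩ | ⟨t2, c2, rest2, hs2, hr2, hrun2⟩
        · exact absurd (congrFun he 1) (by simp)
        · rw [show tp .q2 = 2 from rfl, at2] at hr2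
          cases w with
          | nil =>
            simp only [List.map_nil, List.nil_append, List.cons.injEq] at hr2
            obtain ⟨hc2, _⟩ := hr2
            subst hc2
            simp [stp] at hs2
          | cons y w' =>
            simp only [List.map_cons, List.cons_append, List.cons.injEq] at hr2
            obtain ⟨hc2, hrest2⟩ := hr2
            subst hc2; subst hrest2
            cases y
            · simp [stp] at hs2
            · simp only [stp, Option.some.injEq] at hs2
              subst hs2
              rw [show tp .q2 = 2 from rfl, upd2] at hrun2
              obtain ⟨d, hv, hw⟩ := inv_r2 v w' hrun2
              exact ⟨0, d + 1, by rw [hv]; rfl, by rw [hw]; rfl⟩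
      · -- v starts with true : stay in p2
        simp only [stp, Option.some.injEq] at hs
        subst hs
        rw [show tp .p2 = 1 from rfl, upd1] at hrun
        obtain ⟨c, d, hv, hw⟩ := ih w hrun
        exact ⟨c + 1, d, by rw [hv]; rfl, hw⟩

lemma inv_u1 : ∀ (u : List Bool) (y z : List (Option Bool)),
    M.Run .u1 ![u.map some ++ [none], y, z] .acc → M.Run .p1 ![[], y, z] .acc := by
  intro u
  induction u with
  | nil =>
    intro y z h
    rcases run_inv h with ⟨he, _⟩ | ⟨t, c, rest, hs, hr, hrun⟩
    · exact absurd (congrFun he 0) (by simp)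
    · rw [show tp .u1 = 0 from rfl, at0] at hr
      simp only [List.map_nil, List.nil_append, List.cons.injEq] at hr
      obtain ⟨hc, hrest⟩ := hr
      subst hc; subst hrest
      simp only [stp, Option.some.injEq] at hs
      subst hs
      rw [show tp .u1 = 0 from rfl, upd0] at hrun
      exact hrun
  | cons x u ih =>
    intro y z h
    rcases run_inv h with ⟨he, _⟩ | ⟨t, c, rest, hs, hr, hrun⟩
    · exact absurd (congrFun he 0) (by simp)
    · rw [show tp .u1 = 0 from rfl, at0] at hr
      simp only [List.map_cons, List.cons_append, List.cons.injEq] at hr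
      obtain ⟨hc, hrest⟩ := hr
      subst hc; subst hrest
      cases x <;> simp only [stp, Option.some.injEq] at hs <;> subst hs <;>
        rw [show tp .u1 = 0 from rfl, upd0] at hrun <;> exact ih y z hrun

lemma inv_u2 : ∀ (u : List Bool) (y z : List (Option Bool)),
    M.Run .u2 ![u.map some ++ [none], y, z] .acc → M.Run .p2 ![[], y, z] .acc := by
  intro u
  induction u with
  | nil =>
    intro y z h
    rcases run_inv h with ⟨he, _⟩ | ⟨t, c, rest, hs, hr, hrun⟩
    · exact absurd (congrFun he 0) (by simp)
    · rw [show tp .u2 = 0 from rfl, at0] at hr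
      simp only [List.map_nil, List.nil_append, List.cons.injEq] at hr
      obtain ⟨hc, hrest⟩ := hr
      subst hc; subst hrest
      simp only [stp, Option.some.injEq] at hs
      subst hs
      rw [show tp .u2 = 0 from rfl, upd0] at hrun
      exact hrun
  | cons x u ih =>
    intro y z h
    rcases run_inv h with ⟨he, _⟩ | ⟨t, c, rest, hs, hr, hrun⟩
    · exact absurd (congrFun he 0) (by simp)
    · rw [show tp .u2 = 0 from rfl, at0] at hr
      simp only [List.map_cons, List.cons_append, List.cons.injEq] at hr
      obtain ⟨hc, hrest⟩ := hr
      subst hc; subst hrest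
      cases x <;> simp only [stp, Option.some.injEq] at hs <;> subst hs <;>
        rw [show tp .u2 = 0 from rfl, upd0] at hrun <;> exact ih y z hrun

lemma mem_of_acc (t : Fin 3 → List Bool) (h : M.Accepts t) : t ∈ LL := by
  obtain ⟨f, hf, hrun⟩ := h
  have hfa : f = St.acc := hf
  subst hfa
  rw [ct_eq] at hrun
  rw [show M.start = St.s0 from rfl] at hrun
  rcases run_inv hrun with ⟨he, _⟩ | ⟨s1, c, rest, hs, hr, hrun1⟩
  · exact absurd (congrFun he 0) (by simp)
  · rw [show tp St.s0 = 0 from rfl, at0] at hr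
    cases hu : t 0 with
    | nil => exact Or.inl hu
    | cons x u =>
      rw [hu] at hr
      simp only [List.map_cons, List.cons_append, List.cons.injEq] at hr
      obtain ⟨hc, hrest⟩ := hr
      subst hc; subst hrest
      cases x
      · simp only [stp, Option.some.injEq] at hs
        subst hs
        rw [show tp St.s0 = 0 from rfl, upd0] at hrun1
        have h2 := inv_u2 u _ _ hrun1
        obtain ⟨c, d, hv, hw⟩ := inv_p2 (t 1) (t 2) h2
        exact Or.inr (Or.inr ⟨u, c, d, hu, hv, hw⟩)
      · simp only [stp, Option.some.injEq] at hs
        subst hs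
        rw [show tp St.s0 = 0 from rfl, upd0] at hrun1
        have h2 := inv_u1 u _ _ hrun1
        obtain ⟨c, d, hv, hw⟩ := inv_p1 (t 1) (t 2) h2
        exact Or.inr (Or.inl ⟨u, c, d, hu, hv, hw⟩)

lemma LL_quasi : IsQuasiRegular LL := ⟨M, fun t => ⟨acc_of_mem t, mem_of_acc t⟩⟩

/-- Conversion of a deterministic semi-sorted automaton into a non-deterministic one. -/
def toSAA {A : Type} {n : ℕ} (N : SemiSortedAA A n) : SAA A n where
  State := N.State
  fintype := N.fintype
  start := {N.start}
  accept := N.accept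
  step := fun s c => {t | N.step s c = some t}
  eps := fun _ => ∅
  tape := N.tape

lemma toSAA_run {A : Type} {n : ℕ} {N : SemiSortedAA A n} {s f : N.State}
    {r : Fin n → List (Option A)} :
    (toSAA N).Run s r f ↔ N.Run s r f := by
  constructor
  · intro h
    exact SAA.Run.rec (M := toSAA N) (motive := fun s r f _ => N.Run s r f)
      (fun s => SemiSortedAA.Run.nil s)
      (fun h _ _ => absurd h (Set.notMem_empty _))
      (fun {s t f c rest r} h hr _ ih => SemiSortedAA.Run.step (s := s) (t := t) h hr ih) h
  · intro h
    induction h with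
    | nil s => exact SAA.Run.nil (M := toSAA N) s
    | step h hr hrun ih => exact SAA.Run.step h hr ih

lemma weak_of_quasi {A : Type} {n : ℕ} {L : Set (Fin n → List A)}
    (h : IsQuasiRegular L) : IsWeaklyRegular L := by
  obtain ⟨N, hN⟩ := h
  refine ⟨toSAA N, fun w => (hN w).trans ?_⟩
  constructor
  · rintro ⟨f, hf, hrun⟩
    exact ⟨N.start, rfl, f, hf, toSAA_run.mpr hrun⟩
  · rintro ⟨s₀, hs₀, f, hf, hrun⟩
    have : s₀ = N.start := hs₀
    subst this
    exact ⟨f, hf, toSAA_run.mp hrun⟩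

namespace SAA
variable {A : Type} {n : ℕ} {M : SAA A n}

/-- Linearised runs: the list records, in order, the pairs (tape, symbol) consumed. -/
inductive Seq (M : SAA A n) : M.State → List (Fin n × Option A) → M.State → Prop
  | nil (s : M.State) : Seq M s [] s
  | eps {s t f : M.State} {l} (h : t ∈ M.eps s) (h2 : Seq M t l f) : Seq M s l f
  | step {s t f : M.State} {c : Option A} {l} (h : t ∈ M.step s c)
      (h2 : Seq M t l f) : Seq M s ((M.tape s, c) :: l) f

def filt (l : List (Fin n × Option A)) (i : Fin n) : List (Option A) :=
  (l.filter (fun p => decide (p.1 = i))).map Prod.snd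

@[simp] lemma filt_nil (i : Fin n) : filt ([] : List (Fin n × Option A)) i = [] := rfl

lemma filt_cons_self (i : Fin n) (c : Option A) (l : List (Fin n × Option A)) :
    filt ((i, c) :: l) i = c :: filt l i := by simp [filt]

lemma filt_cons_ne {i j : Fin n} (h : j ≠ i) (c : Option A) (l : List (Fin n × Option A)) :
    filt ((j, c) :: l) i = filt l i := by simp [filt, h]

lemma filt_append (l₁ l₂ : List (Fin n × Option A)) (i : Fin n) :
    filt (l₁ ++ l₂) i = filt l₁ i ++ filt l₂ i := by simp [filt]

lemma run_to_seq {s f : M.State} {r : Fin n → List (Option A)} (h : M.Run s r f) :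
    ∃ l, Seq M s l f ∧ ∀ i, filt l i = r i := by
  induction h with
  | nil s => exact ⟨[], Seq.nil s, fun i => rfl⟩
  | eps h hrun ih =>
    obtain ⟨l, hl, hf⟩ := ih
    exact ⟨l, Seq.eps h hl, hf⟩
  | step h hr hrun ih =>
    rename_i s t f' c rest r
    obtain ⟨l, hl, hf⟩ := ih
    refine ⟨(M.tape s, c) :: l, Seq.step h hl, fun i => ?_⟩
    by_cases hi : M.tape s = i
    · subst hi
      rw [filt_cons_self, hf (M.tape s), Function.update_self, hr]
    · rw [filt_cons_ne hi, hf i, Function.update_of_ne (fun hh => hi hh.symm)]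

lemma seq_to_run {s f : M.State} {l} (h : Seq M s l f) :
    M.Run s (fun i => filt l i) f := by
  induction h with
  | nil s => have : (fun i => filt ([] : List (Fin n × Option A)) i) = fun _ => ([] : List (Option A)) := rfl
             rw [this]; exact Run.nil s
  | eps h h2 ih => exact Run.eps h ih
  | step h h2 ih =>
    rename_i s t f' c l
    refine Run.step (rest := filt l (M.tape s)) h (filt_cons_self _ _ _) ?_
    have : Function.update (fun i => filt ((M.tape s, c) :: l) i) (M.tape s) (filt l (M.tape s))
        = fun i => filt l i := by
      funext i
      by_cases hi : i = M.tape s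
      · subst hi; simp
      · rw [Function.update_of_ne hi, filt_cons_ne (fun hh => hi hh.symm)]
    rw [this]; exact ih

lemma seq_comp {s m f : M.State} {l₁ l₂} (h1 : Seq M s l₁ m) (h2 : Seq M m l₂ f) :
    Seq M s (l₁ ++ l₂) f := by
  induction h1 with
  | nil s => simpa using h2
  | eps h h1' ih => exact Seq.eps h (ih h2)
  | step h h1' ih => exact Seq.step h (ih h2)

lemma seq_trace {s f : M.State} {l} (h : Seq M s l f) :
    ∃ g : ℕ → M.State, g 0 = s ∧ Seq M (g l.length) [] f ∧
      ∀ j (hj : j < l.length), Seq M (g j) [l.get ⟨j, hj⟩] (g (j + 1)) := by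
  induction h with
  | nil s => exact ⟨fun _ => s, rfl, Seq.nil s, fun j hj => absurd hj (by simp)⟩
  | eps h h2 ih =>
    rename_i s t f' l
    obtain ⟨g, hg0, hgl, hgj⟩ := ih
    refine ⟨fun k => if k = 0 then s else g k, by simp, ?_, ?_⟩
    · by_cases hl : l.length = 0
      · rw [hl]; simp only [if_pos rfl]
        rw [hl] at hgl; rw [hg0] at hgl
        exact Seq.eps h hgl
      · simp only [if_neg hl]; exact hgl
    · intro j hj
      cases j with
      | zero =>
        simp only [if_pos rfl, if_neg (Nat.one_ne_zero)]
        have := hgj 0 hj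
        rw [hg0] at this
        exact Seq.eps h this
      | succ j =>
        simp only [if_neg (Nat.succ_ne_zero j), if_neg (Nat.succ_ne_zero (j+1))]
        exact hgj (j+1) hj
  | step h h2 ih =>
    rename_i s t f' c l
    obtain ⟨g, hg0, hgl, hgj⟩ := ih
    refine ⟨fun k => match k with | 0 => s | (k+1) => g k, rfl, ?_, ?_⟩
    · simpa using hgl
    · intro j hj
      cases j with
      | zero =>
        simp only []
        rw [hg0]
        exact Seq.step h (Seq.nil t)
      | succ j =>
        have hj' : j < l.length := by simpa using hj
        simpa using hgj j hj'

lemma seq_slice {s f : M.State} {l} (h : Seq M s l f)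
    (g : ℕ → M.State) (hgj : ∀ j (hj : j < l.length), Seq M (g j) [l.get ⟨j, hj⟩] (g (j + 1))) :
    ∀ k j, j ≤ k → k ≤ l.length → Seq M (g j) ((l.drop j).take (k - j)) (g k) := by
  intro k
  induction k with
  | zero =>
    intro j hj _
    interval_cases j
    exact Seq.nil _
  | succ k ih =>
    intro j hjk hkl
    rcases Nat.eq_or_lt_of_le hjk with he | hlt
    · rw [← he]; simp only [Nat.sub_self, List.take_zero]; exact Seq.nil _
    · have hjk' : j ≤ k := by omega
      have hk : k < l.length := by omega
      have h1 := ih j hjk' (by omega)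
      have h2 := hgj k hk
      have hsl : (l.drop j).take (k + 1 - j) = (l.drop j).take (k - j) ++ [l.get ⟨k, hk⟩] := by
        have h3 : k + 1 - j = (k - j) + 1 := by omega
        rw [h3, List.take_succ]
        congr 1
        have h4 : (l.drop j)[k - j]? = some (l.get ⟨k, hk⟩) := by
          rw [List.getElem?_drop]
          have : j + (k - j) = k := by omega
          rw [this]
          exact List.getElem?_eq_getElem hk
        rw [h4]; rfl
      rw [hsl]
      exact seq_comp h1 h2

end SAA

/-! ### The two-variable language and its non-regularity -/

def SS : Set (Fin 2 → List Bool) :=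
  {p | ∃ m, p 0 = List.replicate m true ++ List.replicate m false ∧
        p 1 = List.replicate m true}

lemma count_tf (L : List Bool) : L.count true + L.count false = L.length := by
  induction L with
  | nil => rfl
  | cons x L ih => cases x <;> simp [List.count_cons] <;> omega

lemma fin2 (i : Fin 2) : i = 0 ∨ i = 1 := by
  fin_cases i
  · exact Or.inl rfl
  · exact Or.inr rfl

lemma notBA (m' : ℕ) :
    ¬ List.Sublist [false, true] (List.replicate m' true ++ List.replicate m' false) := by
  intro h
  rw [List.sublist_append_iff] at h
  obtain ⟨l1, l2, heq, h1, h2⟩ := h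
  have hm1 : ∀ x ∈ l1, x = true := fun x hx => List.eq_of_mem_replicate (h1.subset hx)
  have hm2 : ∀ x ∈ l2, x = false := fun x hx => List.eq_of_mem_replicate (h2.subset hx)
  rcases l1 with _ | ⟨a, l1'⟩
  · simp only [List.nil_append] at heq
    have := hm2 true (by rw [← heq]; simp)
    simp at this
  · have ha : a = false := by
      have := congrArg (fun l => l.head?) heq
      simpa using this.symm
    have := hm1 a (by simp)
    rw [ha] at this
    simp at this

lemma count_none_msw (v : List Bool) :
    (v.map some ++ [none]).count none = 1 := by
  simp [List.count_append]
  exact List.count_eq_zero.mpr (by simp)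

lemma split_ms (x q : List (Option Bool)) (w : List Bool)
    (h : x ++ q = w.map some ++ [none]) (hq : q ≠ []) :
    ∃ α δ : List Bool, w = α ++ δ ∧ x = α.map some ∧ q = δ.map some ++ [none] := by
  have hlen : x.length + q.length = w.length + 1 := by
    have := congrArg List.length h
    simpa using this
  have hxw : x.length ≤ w.length := by
    have : 1 ≤ q.length := List.length_pos_iff.mpr hq
    omega
  refine ⟨w.take x.length, w.drop x.length, (List.take_append_drop _ w).symm, ?_, ?_⟩
  all_goals {
    have h2 : x ++ q = (w.take x.length).map some ++ ((w.drop x.length).map some ++ [none]) := by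
      rw [← List.append_assoc, ← List.map_append, List.take_append_drop]
      exact h
    have h3 := List.append_inj h2 (by simp [hxw])
    tauto }

lemma pump_tape (xi yi zi : List (Option Bool)) (wi : List Bool)
    (h : xi ++ (yi ++ zi) = wi.map some ++ [none]) (hy : yi.count none = 0) :
    ∃ α β γ : List Bool, wi = α ++ β ++ γ ∧
      xi ++ (yi ++ (yi ++ zi)) = (α ++ β ++ β ++ γ).map some ++ [none] ∧
      (yi ≠ [] → β ≠ []) := by
  by_cases hyz : yi ++ zi = []
  · have hy0 : yi = [] := by
      rcases List.append_eq_nil_iff.mp hyz with ⟨h1, h2⟩; exact h1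
    have hz0 : zi = [] := by
      rcases List.append_eq_nil_iff.mp hyz with ⟨h1, h2⟩; exact h2
    refine ⟨wi, [], [], by simp, ?_, fun hh => absurd hy0 hh⟩
    rw [hy0, hz0] at h ⊢
    simpa using h
  · obtain ⟨α, δ, hw, hx, hq⟩ := split_ms xi (yi ++ zi) wi h hyz
    by_cases hz : zi = []
    · exfalso
      rw [hz, List.append_nil] at hq
      have : yi.count none = 1 := by rw [hq]; exact count_none_msw δ
      omega
    · obtain ⟨β, γ, hδ, hy2, hz2⟩ := split_ms yi zi δ hq hz
      refine ⟨α, β, γ, by rw [hw, hδ, List.append_assoc], ?_, ?_⟩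
      · rw [hx, hy2, hz2]
        simp [List.map_append, List.append_assoc]
      · intro hyne hb
        rw [hb] at hy2
        simp at hy2
        exact hyne hy2

lemma filt_len (l : List (Fin 2 × Option Bool)) :
    l.length = (SAA.filt l 0).length + (SAA.filt l 1).length := by
  induction l with
  | nil => rfl
  | cons p l ih =>
    obtain ⟨i, c⟩ := p
    rcases fin2 i with hi | hi <;> subst hi
    · rw [SAA.filt_cons_self, SAA.filt_cons_ne (by decide)]
      simp only [List.length_cons]
      omega
    · rw [SAA.filt_cons_self, SAA.filt_cons_ne (by decide)]
      simp only [List.length_cons]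
      omega

lemma cnt_eq (l : List (Fin 2 × Option Bool)) :
    l.countP (fun p => decide (p.2 = none)) =
      (SAA.filt l 0).count none + (SAA.filt l 1).count none := by
  induction l with
  | nil => rfl
  | cons p l ih =>
    obtain ⟨i, c⟩ := p
    rw [List.countP_cons]
    rcases fin2 i with hi | hi <;> subst hi
    · rw [SAA.filt_cons_self, SAA.filt_cons_ne (by decide), List.count_cons]
      by_cases hc : c = none <;> simp [hc, ih] <;> omega
    · rw [SAA.filt_cons_self, SAA.filt_cons_ne (by decide), List.count_cons]
      by_cases hc : c = none <;> simp [hc, ih] <;> omega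

lemma SS_not_weak : ¬ IsWeaklyRegular SS := by
  rintro ⟨N, hN⟩
  haveI : Fintype N.State := N.fintype
  set K := Fintype.card N.State with hK
  set m := K + 1 with hm
  set w : Fin 2 → List Bool :=
    ![List.replicate m true ++ List.replicate m false, List.replicate m true] with hwdef
  have hw0 : w 0 = List.replicate m true ++ List.replicate m false := rfl
  have hw1 : w 1 = List.replicate m true := rfl
  obtain ⟨s0, hs0, f, hf, hrun⟩ := (hN w).mp ⟨m, hw0, hw1⟩
  obtain ⟨l, hl, hfi⟩ := SAA.run_to_seq hrun
  have hfi' : ∀ i, SAA.filt l i = (w i).map some ++ [none] := hfi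
  have hlen : l.length = 3 * m + 2 := by
    have h1 := filt_len l
    rw [hfi' 0, hfi' 1, hw0, hw1] at h1
    simp at h1
    omega
  have hcnt2 : l.countP (fun p => decide (p.2 = none)) = 2 := by
    rw [cnt_eq, hfi' 0, hfi' 1, count_none_msw, count_none_msw]
  obtain ⟨g, hg0, hgl, hgj⟩ := SAA.seq_trace hl
  have key : ∀ a b : ℕ, a < b → b ≤ l.length → g a = g b →
      (l.take a).countP (fun p => decide (p.2 = none)) =
      (l.take b).countP (fun p => decide (p.2 = none)) → False := by
    intro a b hab hbl hg hcnteq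
    set x := l.take a with hx
    set y := (l.drop a).take (b - a) with hy
    set z := l.drop b with hz
    have hxy : x ++ y = l.take b := by
      rw [hx, hy, ← List.take_add]
      congr 1
      omega
    have hxyz : x ++ (y ++ z) = l := by
      rw [← List.append_assoc, hxy, hz, List.take_append_drop]
    have hsx : SAA.Seq N s0 x (g a) := by
      have h2 := SAA.seq_slice hl g hgj a 0 (Nat.zero_le a) (le_of_lt (lt_of_lt_of_le hab hbl))
      rw [List.drop_zero, Nat.sub_zero, hg0] at h2
      exact h2
    have hsy : SAA.Seq N (g a) y (g b) := SAA.seq_slice hl g hgj b a (le_of_lt hab) hbl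
    have hsz' : SAA.Seq N (g b) z (g l.length) := by
      have h5 := SAA.seq_slice hl g hgj l.length b hbl (le_refl _)
      have h7 : (l.drop b).length = l.length - b := List.length_drop
      rw [← h7, List.take_length] at h5
      exact h5
    have hszf : SAA.Seq N (g b) z f := by
      have h6 := SAA.seq_comp hsz' hgl
      simpa using h6
    have hyne : y ≠ [] := by
      have h8 : y.length = b - a := by
        rw [hy, List.length_take, List.length_drop]
        omega
      intro hcon
      rw [hcon] at h8
      simp at h8
      omega
    have hycnt : y.countP (fun p => decide (p.2 = none)) = 0 := by
      have h9 := congrArg (List.countP (fun p => decide (p.2 = none))) hxy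
      rw [List.countP_append] at h9
      omega
    have hsyb : SAA.Seq N (g b) y (g b) := hg ▸ hsy
    have hpump : SAA.Seq N s0 (x ++ (y ++ (y ++ z))) f :=
      SAA.seq_comp hsx (SAA.seq_comp hsy (SAA.seq_comp hsyb hszf))
    have hrun2 := SAA.seq_to_run hpump
    have hyn : ∀ i : Fin 2, (SAA.filt y i).count none = 0 := by
      have h10 := cnt_eq y
      rw [hycnt] at h10
      intro i
      rcases fin2 i with hi | hi <;> subst hi <;> omega
    have htape : ∀ i : Fin 2, ∃ α β γ : List Bool,
        w i = α ++ β ++ γ ∧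
        SAA.filt (x ++ (y ++ (y ++ z))) i = (α ++ β ++ β ++ γ).map some ++ [none] ∧
        (SAA.filt y i ≠ [] → β ≠ []) := by
      intro i
      have hcont : SAA.filt x i ++ (SAA.filt y i ++ SAA.filt z i) = (w i).map some ++ [none] := by
        rw [← SAA.filt_append, ← SAA.filt_append, hxyz]
        exact hfi' i
      obtain ⟨α, β, γ, h1, h2, h3⟩ := pump_tape _ _ _ _ hcont (hyn i)
      refine ⟨α, β, γ, h1, ?_, h3⟩
      rw [SAA.filt_append, SAA.filt_append, SAA.filt_append]
      exact h2
    obtain ⟨α0, β0, γ0, hw0e, hc0, hb0⟩ := htape 0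
    obtain ⟨α1, β1, γ1, hw1e, hc1, hb1⟩ := htape 1
    have hacc : SAA.Accepts N ![α0 ++ β0 ++ β0 ++ γ0, α1 ++ β1 ++ β1 ++ γ1] := by
      refine ⟨s0, hs0, f, hf, ?_⟩
      have hce : (fun i : Fin 2 =>
          ((![α0 ++ β0 ++ β0 ++ γ0, α1 ++ β1 ++ β1 ++ γ1] : Fin 2 → List Bool) i).map some
            ++ [none]) = fun i => SAA.filt (x ++ (y ++ (y ++ z))) i := by
        funext i
        rcases fin2 i with hi | hi <;> subst hi
        · exact hc0.symm
        · exact hc1.symm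
      rw [hce]
      exact hrun2
    obtain ⟨m', hm0, hm1⟩ := (hN _).mpr hacc
    have hm0' : α0 ++ β0 ++ β0 ++ γ0 = List.replicate m' true ++ List.replicate m' false := hm0
    have hm1' : α1 ++ β1 ++ β1 ++ γ1 = List.replicate m' true := hm1
    have hwe0 : α0 ++ β0 ++ γ0 = List.replicate m true ++ List.replicate m false := by
      rw [← hw0e]
      exact hw0
    have hwe1 : α1 ++ β1 ++ γ1 = List.replicate m true := by
      rw [← hw1e]
      exact hw1
    have e1 := congrArg (List.count true) hm0'
    have e2 := congrArg (List.count false) hm0'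
    have e3 := congrArg List.length hm1'
    have e4 := congrArg (List.count true) hwe0
    have e5 := congrArg (List.count false) hwe0
    have e6 := congrArg List.length hwe1
    simp [List.count_append, List.count_replicate, List.length_append] at e1 e2 e3 e4 e5 e6
    have hbne : β0 ≠ [] ∨ β1 ≠ [] := by
      obtain ⟨p0, y', hy'⟩ := List.exists_cons_of_ne_nil hyne
      obtain ⟨i0, c0⟩ := p0
      rcases fin2 i0 with hi | hi <;> subst hi
      · exact Or.inl (hb0 (by rw [hy', SAA.filt_cons_self]; simp))
      · exact Or.inr (hb1 (by rw [hy', SAA.filt_cons_self]; simp))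
    have hptrue : 0 < β0.count true := by
      rcases hbne with hb | hb
      · have h11 := count_tf β0
        have hlb : 0 < β0.length := List.length_pos_iff.mpr hb
        omega
      · have hlb : 0 < β1.length := List.length_pos_iff.mpr hb
        omega
    have hpfalse : 0 < β0.count false := by omega
    have hmt : true ∈ β0 := List.count_pos_iff.mp hptrue
    have hmf : false ∈ β0 := List.count_pos_iff.mp hpfalse
    have hsub : List.Sublist [false, true] (β0 ++ β0) :=
      List.Sublist.append (List.singleton_sublist.mpr hmf) (List.singleton_sublist.mpr hmt)
    have hsub2 : List.Sublist [false, true] (α0 ++ β0 ++ β0 ++ γ0) := by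
      have h12 : List.Sublist (β0 ++ β0) ((β0 ++ β0) ++ γ0) := List.sublist_append_left _ _
      have h13 : List.Sublist ((β0 ++ β0) ++ γ0) (α0 ++ ((β0 ++ β0) ++ γ0)) :=
        List.sublist_append_right _ _
      have h14 := (hsub.trans h12).trans h13
      have h15 : α0 ++ ((β0 ++ β0) ++ γ0) = α0 ++ β0 ++ β0 ++ γ0 := by
        simp [List.append_assoc]
      rwa [h15] at h14
    rw [hm0'] at hsub2
    exact notBA m' hsub2
  have hcard : Fintype.card (N.State × Fin 3) < Fintype.card (Fin (l.length + 1)) := by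
    rw [Fintype.card_prod, Fintype.card_fin, Fintype.card_fin]
    omega
  have hle : ∀ j : ℕ, (l.take j).countP (fun p => decide (p.2 = none)) < 3 := by
    intro j
    have h1 := (List.take_sublist j l).countP_le (p := fun p => decide (p.2 = none))
    omega
  have hpig := Fintype.exists_ne_map_eq_of_card_lt
    (fun j : Fin (l.length + 1) =>
      ((g (j : ℕ), ⟨(l.take (j : ℕ)).countP (fun p => decide (p.2 = none)), hle _⟩) :
        N.State × Fin 3)) hcard
  obtain ⟨j1, j2, hne, heq⟩ := hpig
  have hfst : g (j1 : ℕ) = g (j2 : ℕ) := congrArg Prod.fst heq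
  have hsnd : (l.take (j1 : ℕ)).countP (fun p => decide (p.2 = none)) =
      (l.take (j2 : ℕ)).countP (fun p => decide (p.2 = none)) := by
    have h2 := congrArg (fun p => (p.2 : Fin 3).val) heq
    simpa using h2
  rcases lt_or_gt_of_ne hne with hlt | hlt
  · exact key j1 j2 hlt (by omega) hfst hsnd
  · exact key j2 j1 hlt (by omega) hfst.symm hsnd.symm

lemma fc0 (u : List Bool) (v : Fin 2 → List Bool) : (Fin.cons u v : Fin 3 → List Bool) 0 = u := rfl
lemma fc1 (u : List Bool) (v : Fin 2 → List Bool) : (Fin.cons u v : Fin 3 → List Bool) 1 = v 0 := rfl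
lemma fc2 (u : List Bool) (v : Fin 2 → List Bool) : (Fin.cons u v : Fin 3 → List Bool) 2 = v 1 := rfl

lemma uniq_cd {c d c' d' : ℕ}
    (h : List.replicate c true ++ List.replicate d false =
      List.replicate c' true ++ List.replicate d' false) : c = c' ∧ d = d' := by
  have h1 := congrArg (List.count true) h
  have h2 := congrArg List.length h
  simp [List.count_append, List.count_replicate] at h1 h2
  omega

lemma S_char : { v : Fin 2 → List Bool | ∀ u : List Bool, Fin.cons u v ∈ LL } = SS := by
  ext v
  simp only [Set.mem_setOf_eq]
  constructor
  · intro h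
    have h1 := h [true]
    have h2 := h [false]
    simp only [LL, Set.mem_setOf_eq, fc0, fc1, fc2] at h1 h2
    rcases h1 with h1 | ⟨u', c, d, h0', hv, hw⟩ | ⟨u', c, d, h0', hv, hw⟩
    · simp at h1
    · rcases h2 with h2 | ⟨u'', c', d', h0'', hv', hw'⟩ | ⟨u'', c', d', h0'', hv', hw'⟩
      · simp at h2
      · simp at h0''
      · obtain ⟨hc, hd⟩ := uniq_cd (hv.symm.trans hv')
        have hcd : c = d := by
          have := congrArg List.length (hw.symm.trans hw')
          simp at this
          omega
        refine ⟨c, ?_, hw⟩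
        rw [hv, ← hcd]
    · simp at h0'
  · rintro ⟨mm, h0, h1⟩ u
    cases u with
    | nil => exact Or.inl (fc0 [] v)
    | cons xu u' =>
      cases xu
      · exact Or.inr (Or.inr ⟨u', mm, mm, fc0 _ v, by rw [fc1]; exact h0, by rw [fc2]; exact h1⟩)
      · exact Or.inr (Or.inl ⟨u', mm, mm, fc0 _ v, by rw [fc1]; exact h0, by rw [fc2]; exact h1⟩)

/-- Universal quantification over a coordinate does not preserve weak regularity:
there are a finite alphabet `A` and a quasi-regular (hence weakly regular)
three-variable language `L` over `A` such that
`{(v, w) : ∀ u, (u, v, w) ∈ L}` is not weakly regular. -/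
theorem weaklyRegular_not_closed_under_forall :
    ∃ (A : Type) (_ : Fintype A) (L : Set (Fin 3 → List A)),
      IsQuasiRegular L ∧ IsWeaklyRegular L ∧
      ¬ IsWeaklyRegular { v : Fin 2 → List A | ∀ u : List A, Fin.cons u v ∈ L } := by
  refine ⟨Bool, inferInstance, LL, LL_quasi, weak_of_quasi LL_quasi, ?_⟩
  rw [S_char]
  exact SS_not_weak
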